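/- Let m ≥ 5 and let ε be a primitive (m-1)-th root of unity in an algebraically closed field K (with char K = 0 or char K = p ≥ 7, m ≤ p-1). If σ is a permutation of {1,...,m-1} and c ∈ K is such that ε^{σ(i)} = c·ε^i for all 1 ≤ i ≤ m-1, then σ is a power of the cyclic shift i ↦ i+1 mod (m-1). Consequently the stabilizer of the point (ε : ε² : ... : ε^{m-1} : 0) in Sym_m acting by coordinate permutation is cyclic of order m-1. -/

import Mathlib

open Fin.NatCast

section Aux

variable {K : Type*} [Field K]

lemma aux_pow_mod {N : ℕ} {ε : K} (hε : IsPrimitiveRoot ε N) (a : ℕ) :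
    ε ^ (a % N) = ε ^ a := by
  conv_rhs => rw [← Nat.div_add_mod a N]
  rw [pow_add, pow_mul, hε.pow_eq_one, one_pow, one_mul]

lemma aux_pow_congr {N : ℕ} {ε : K} (hε : IsPrimitiveRoot ε N) {a b : ℕ}
    (h : a % N = b % N) : ε ^ a = ε ^ b := by
  rw [← aux_pow_mod hε a, h, aux_pow_mod hε b]

lemma aux_mod_of_pow_eq_le {N : ℕ} {ε : K} (hε : IsPrimitiveRoot ε N) (hne : ε ≠ 0)
    {a b : ℕ} (hab : a ≤ b) (h : ε ^ a = ε ^ b) : a % N = b % N := by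
  obtain ⟨k, rfl⟩ := Nat.exists_eq_add_of_le hab
  have h1 : ε ^ a * 1 = ε ^ a * ε ^ k := by rw [mul_one, ← pow_add, h]
  have h2 : ε ^ k = 1 := (mul_left_cancel₀ (pow_ne_zero a hne) h1).symm
  obtain ⟨t, rfl⟩ := (hε.pow_eq_one_iff_dvd k).mp h2
  rw [Nat.add_mul_mod_self_left]

lemma aux_mod_of_pow_eq {N : ℕ} {ε : K} (hε : IsPrimitiveRoot ε N) (hne : ε ≠ 0)
    {a b : ℕ} (h : ε ^ a = ε ^ b) : a % N = b % N := by
  rcases le_total a b with hab | hab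
  · exact aux_mod_of_pow_eq_le hε hne hab h
  · exact (aux_mod_of_pow_eq_le hε hne hab h.symm).symm

lemma aux_rotpow (n j : ℕ) (i : Fin (n + 1)) :
    (finRotate (n + 1) ^ j) i = i + (j : Fin (n + 1)) := by
  induction j with
  | zero => simp
  | succ j ih =>
    rw [pow_succ', Equiv.Perm.mul_apply, ih, finRotate_succ_apply, Nat.cast_add,
      Nat.cast_one]
    rw [add_assoc]

/-- The main cyclic lemma. -/
lemma aux_cyc (n : ℕ) (ε : K) (hε : IsPrimitiveRoot ε (n + 1))
    (σ : Equiv.Perm (Fin (n + 1))) (c : K)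
    (hσ : ∀ i : Fin (n + 1), ε ^ ((σ i : ℕ) + 1) = c * ε ^ ((i : ℕ) + 1)) :
    σ = finRotate (n + 1) ^ ((σ 0 : ℕ)) := by
  have hε0 : ε ≠ 0 := hε.ne_zero (Nat.succ_ne_zero n)
  have hc : c = ε ^ (σ 0 : ℕ) := by
    have h0 := hσ 0
    simp only [Fin.val_zero, zero_add, pow_one, pow_succ, pow_zero, one_mul] at h0
    exact (mul_right_cancel₀ hε0 h0.symm)
  have key : ∀ i : Fin (n + 1),
      ((σ i : ℕ) + 1) % (n + 1) = ((σ 0 : ℕ) + ((i : ℕ) + 1)) % (n + 1) := by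
    intro i
    apply aux_mod_of_pow_eq hε hε0
    rw [hσ i, hc, ← pow_add]
  ext i
  rw [aux_rotpow]
  have h1 : (σ i : ℕ) % (n + 1) = ((σ 0 : ℕ) + (i : ℕ)) % (n + 1) := by
    have h2 := key i
    have h3 : (σ 0 : ℕ) + ((i : ℕ) + 1) = ((σ 0 : ℕ) + (i : ℕ)) + 1 := by ring
    rw [h3] at h2
    exact Nat.ModEq.add_right_cancel' 1 h2
  have h4 : (σ i : ℕ) = ((σ 0 : ℕ) + (i : ℕ)) % (n + 1) := by
    rw [← Nat.mod_eq_of_lt (σ i).isLt, h1]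
  rw [h4, Fin.add_def, Fin.val_natCast]
  calc ((σ 0 : ℕ) + (i : ℕ)) % (n + 1)
      = ((i : ℕ) + (σ 0 : ℕ)) % (n + 1) := by rw [Nat.add_comm]
    _ = ((i : ℕ) + (σ 0 : ℕ) % (n + 1)) % (n + 1) :=
        (Nat.ModEq.add_left _ (Nat.mod_modEq _ _)).symm

end Aux

/-- Extend a permutation of `Fin (n+1)` to `Fin (n+2)` fixing the last point. -/
def auxExt (n : ℕ) (σ : Equiv.Perm (Fin n)) : Equiv.Perm (Fin (n + 1)) :=
  (finSuccEquivLast.symm).permCongr σ.optionCongr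

lemma auxExt_castSucc (n : ℕ) (σ : Equiv.Perm (Fin n)) (i : Fin n) :
    auxExt n σ (Fin.castSucc i) = Fin.castSucc (σ i) := by
  simp [auxExt, Equiv.permCongr_apply]

lemma auxExt_last (n : ℕ) (σ : Equiv.Perm (Fin n)) :
    auxExt n σ (Fin.last n) = Fin.last n := by
  simp [auxExt, Equiv.permCongr_apply]

theorem stmt16 {K : Type*} [Field K] [IsAlgClosed K] (p m : ℕ) (hm : 5 ≤ m)
    (hchar : CharP K 0 ∨ (p.Prime ∧ 7 ≤ p ∧ CharP K p ∧ m ≤ p - 1))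
    (ε : K) (hε : IsPrimitiveRoot ε (m - 1))
    (σ : Equiv.Perm (Fin (m - 1))) (c : K)
    (hσ : ∀ i : Fin (m - 1), ε ^ ((σ i : ℕ) + 1) = c * ε ^ ((i : ℕ) + 1)) :
    (∃ j : ℕ, σ = (finRotate (m - 1)) ^ j) ∧
    Nat.card {τ : Equiv.Perm (Fin m) // ∃ d : K, d ≠ 0 ∧ ∀ i : Fin m,
        (if ((τ i : ℕ)) < m - 1 then ε ^ ((τ i : ℕ) + 1) else 0) =
          d * (if ((i : ℕ)) < m - 1 then ε ^ ((i : ℕ) + 1) else 0)} = m - 1 := by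
  obtain ⟨n, rfl⟩ : ∃ n, m = n + 2 := ⟨m - 2, by omega⟩
  have hmn : n + 2 - 1 = n + 1 := rfl
  rw [hmn] at hε
  show (∃ j : ℕ, σ = (finRotate (n + 1)) ^ j) ∧
    Nat.card {τ : Equiv.Perm (Fin (n + 2)) // ∃ d : K, d ≠ 0 ∧ ∀ i : Fin (n + 2),
        (if ((τ i : ℕ)) < n + 1 then ε ^ ((τ i : ℕ) + 1) else 0) =
          d * (if ((i : ℕ)) < n + 1 then ε ^ ((i : ℕ) + 1) else 0)} = n + 1
  have hε0 : ε ≠ 0 := hε.ne_zero (Nat.succ_ne_zero n)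
  set N := n + 1 with hN
  constructor
  · have hcyc := aux_cyc n ε hε σ c hσ
    exact ⟨_, hcyc⟩
  · -- build the bijection
    set P : Equiv.Perm (Fin (n + 2)) → Prop := fun τ => ∃ d : K, d ≠ 0 ∧ ∀ i : Fin (n + 2),
        (if ((τ i : ℕ)) < n + 1 then ε ^ ((τ i : ℕ) + 1) else 0) =
          d * (if ((i : ℕ)) < n + 1 then ε ^ ((i : ℕ) + 1) else 0) with hP
    have hg : ∀ j : Fin (n + 1), P (auxExt (n + 1) (finRotate (n + 1) ^ (j : ℕ))) := by
      intro j
      refine ⟨ε ^ (j : ℕ), pow_ne_zero _ hε0, ?_⟩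
      intro i
      induction i using Fin.lastCases with
      | last =>
        rw [auxExt_last]
        simp
      | cast x =>
        rw [auxExt_castSucc]
        have hx : ((Fin.castSucc x : Fin (n + 2)) : ℕ) < n + 1 := x.isLt
        have hy : ((Fin.castSucc ((finRotate (n + 1) ^ (j : ℕ)) x) : Fin (n + 2)) : ℕ) < n + 1 :=
          ((finRotate (n + 1) ^ (j : ℕ)) x).isLt
        rw [if_pos hx, if_pos hy]
        have hco : (((finRotate (n + 1) ^ (j : ℕ)) x : Fin (n + 1)) : ℕ) = ((x : ℕ) + (j : ℕ) % (n + 1)) % (n + 1) := by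
          rw [aux_rotpow, Fin.add_def, Fin.val_natCast]
        show ε ^ ((((finRotate (n + 1) ^ (j : ℕ)) x : Fin (n + 1)) : ℕ) + 1) = ε ^ (j : ℕ) * ε ^ ((x : ℕ) + 1)
        rw [hco, ← pow_add]
        apply aux_pow_congr hε
        calc (((x : ℕ) + (j : ℕ) % (n + 1)) % (n + 1) + 1) % (n + 1)
            = (((x : ℕ) + (j : ℕ) % (n + 1)) + 1) % (n + 1) :=
              Nat.ModEq.add_right 1 (Nat.mod_modEq _ _)
          _ = (((x : ℕ) + (j : ℕ)) + 1) % (n + 1) :=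
              Nat.ModEq.add_right 1 (Nat.ModEq.add_left _ (Nat.mod_modEq _ _))
          _ = ((j : ℕ) + ((x : ℕ) + 1)) % (n + 1) := by ring_nf
    let g : Fin (n + 1) → {τ : Equiv.Perm (Fin (n + 2)) // P τ} :=
      fun j => ⟨auxExt (n + 1) (finRotate (n + 1) ^ (j : ℕ)), hg j⟩
    have hrot0 : ∀ j : Fin (n + 1), (finRotate (n + 1) ^ (j : ℕ)) 0 = j := by
      intro j
      rw [aux_rotpow, Fin.cast_val_eq_self, zero_add]
    have ginj : Function.Injective g := by
      intro j1 j2 h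
      have h1 : auxExt (n + 1) (finRotate (n + 1) ^ (j1 : ℕ)) = auxExt (n + 1) (finRotate (n + 1) ^ (j2 : ℕ)) :=
        congrArg Subtype.val h
      have h2 := congrFun (congrArg (⇑) h1) (Fin.castSucc 0)
      rw [auxExt_castSucc, auxExt_castSucc, hrot0, hrot0] at h2
      exact Fin.castSucc_injective _ h2
    have gsurj : Function.Surjective g := by
      rintro ⟨τ, d, hd, hτ⟩
      -- τ fixes the last point
      have hlast : τ (Fin.last (n + 1)) = Fin.last (n + 1) := by
        have h0 := hτ (Fin.last (n + 1))
        rw [if_neg (show ¬ ((Fin.last (n + 1) : Fin (n + 2)) : ℕ) < n + 1 by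
          simp [Fin.val_last]), mul_zero] at h0
        by_contra hne
        have hlt : ((τ (Fin.last (n + 1)) : ℕ)) < n + 1 := by
          have := (τ (Fin.last (n + 1))).isLt
          have hvne : ((τ (Fin.last (n + 1)) : ℕ)) ≠ n + 1 := fun hv => hne (Fin.ext hv)
          omega
        rw [if_pos hlt] at h0
        exact pow_ne_zero _ hε0 h0
      -- restrict τ to the first n+1 coordinates
      set e : Equiv.Perm (Option (Fin (n + 1))) := finSuccEquivLast.permCongr τ with he
      set σ' : Equiv.Perm (Fin (n + 1)) := e.removeNone with hσ'
      have hsome : ∀ x : Fin (n + 1), τ (Fin.castSucc x) = Fin.castSucc (σ' x) := by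
        intro x
        have hxne : τ (Fin.castSucc x) ≠ Fin.last (n + 1) := by
          intro hcon
          have := τ.injective (hcon.trans hlast.symm)
          exact (Fin.castSucc_lt_last x).ne this
        have hex : ∃ x', e (some x) = some x' := by
          rcases Option.eq_none_or_eq_some (e (some x)) with h | h
          · exfalso
            apply hxne
            have : finSuccEquivLast (τ (Fin.castSucc x)) = none := by
              simpa [he, Equiv.permCongr_apply] using h
            have := congrArg finSuccEquivLast.symm this
            simpa using this
          · exact h
        have h1 : some (σ' x) = e (some x) := Equiv.removeNone_some e hex
        have h2 : e (some x) = finSuccEquivLast (τ (Fin.castSucc x)) := by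
          simp [he, Equiv.permCongr_apply]
        rw [h2] at h1
        have := congrArg finSuccEquivLast.symm h1
        simpa using this.symm
      have hext : auxExt (n + 1) σ' = τ := by
        ext i
        induction i using Fin.lastCases with
        | last => rw [auxExt_last, hlast]
        | cast x => rw [auxExt_castSucc, hsome]
      have hσ'' : ∀ x : Fin (n + 1), ε ^ ((σ' x : ℕ) + 1) = d * ε ^ ((x : ℕ) + 1) := by
        intro x
        have h0 := hτ (Fin.castSucc x)
        rw [hsome x] at h0
        rw [if_pos (show ((Fin.castSucc (σ' x) : Fin (n+2)) : ℕ) < n + 1 from (σ' x).isLt),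
          if_pos (show ((Fin.castSucc x : Fin (n+2)) : ℕ) < n + 1 from x.isLt)] at h0
        exact h0
      have hcyc : σ' = finRotate (n + 1) ^ ((σ' 0 : ℕ)) := aux_cyc n ε hε σ' d hσ''
      refine ⟨σ' 0, ?_⟩
      apply Subtype.ext
      show auxExt (n + 1) (finRotate (n + 1) ^ ((σ' 0 : ℕ))) = τ
      rw [← hcyc, hext]
    have hbij : Function.Bijective g := ⟨ginj, gsurj⟩
    have := Nat.card_eq_of_bijective g hbij
    rw [← this, Nat.card_eq_fintype_card, Fintype.card_fin]
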